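/- Let G = (V,E) be any finite simple graph and let 𝒫(G) = { x ∈ ℝ^V : x_v ≥ 0 for all v ∈ V, and x_u + x_v ≤ 1 for every edge uv ∈ E }. Then every extreme point of 𝒫(G) has all coordinates in {0, 1/2, 1}; in particular twice any extreme point is an integer vector. -/

import Mathlib

/-- The polytope `𝒫(G)` of a simple graph `G`: nonnegative real vectors whose
coordinate sums over edges are at most `1`. -/
def graphPolytope {V : Type*} (G : SimpleGraph V) : Set (V → ℝ) :=
  {x | (∀ v, 0 ≤ x v) ∧ ∀ u v, G.Adj u v → x u + x v ≤ 1}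

theorem graphPolytope_extremePoints_half_integral
    {V : Type*} [Fintype V] (G : SimpleGraph V)
    (x : V → ℝ) (hx : x ∈ Set.extremePoints ℝ (graphPolytope G)) :
    ∀ v, x v = 0 ∨ x v = 1 / 2 ∨ x v = 1 := by
  classical
  obtain ⟨⟨hx0, hxE⟩, hext⟩ := hx
  intro v
  by_contra hv
  set good : V → Prop := fun u => x u = 0 ∨ x u = 1 / 2 ∨ x u = 1 with hgood_def
  set f : V → ℝ := fun u => if good u then 1 else min (min (x u) |x u - 1|) |x u - 1/2|
    with hf_def
  have hne : (Finset.univ : Finset V).Nonempty := ⟨v, Finset.mem_univ v⟩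
  set ε : ℝ := Finset.univ.inf' hne f with hε_def
  have hεle : ∀ u, ε ≤ f u := fun u => Finset.inf'_le f (Finset.mem_univ u)
  have hfpos : ∀ u, 0 < f u := by
    intro u
    by_cases h : good u
    · simp [hf_def, h]
    · have h' := h
      simp only [hgood_def] at h'
      push_neg at h'
      obtain ⟨h0, h2, h1⟩ := h'
      simp only [hf_def, if_neg h, lt_min_iff]
      exact ⟨⟨lt_of_le_of_ne (hx0 u) (Ne.symm h0), abs_pos.2 (sub_ne_zero.2 h1)⟩,
        abs_pos.2 (sub_ne_zero.2 h2)⟩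
  have hεpos : 0 < ε := by
    rw [hε_def, Finset.lt_inf'_iff]
    exact fun u _ => hfpos u
  set d : V → ℝ := fun u => if good u then 0 else if x u < 1/2 then ε else -ε with hd_def
  have hd : ∀ u, (d u = 0 ∧ (x u = 0 ∨ x u = 1/2 ∨ x u = 1)) ∨
      (d u = ε ∧ 0 < x u ∧ x u < 1/2 ∧ ε ≤ x u ∧ ε ≤ 1/2 - x u) ∨
      (d u = -ε ∧ 1/2 < x u ∧ x u ≠ 1 ∧ ε ≤ x u ∧ (x u < 1 → ε ≤ 1 - x u)) := by
    intro u
    by_cases hg : good u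
    · refine Or.inl ⟨by simp [hd_def, hg], ?_⟩
      simpa [hgood_def] using hg
    · have h' := hg
      simp only [hgood_def] at h'
      push_neg at h'
      obtain ⟨h0, h2, h1⟩ := h'
      have hεm : ε ≤ min (min (x u) |x u - 1|) |x u - 1/2| := by
        have := hεle u
        simpa [hf_def, if_neg hg] using this
      have hεxu : ε ≤ x u := le_trans hεm (le_trans (min_le_left _ _) (min_le_left _ _))
      have hεabs1 : ε ≤ |x u - 1| := le_trans hεm (le_trans (min_le_left _ _) (min_le_right _ _))
      have hεabs2 : ε ≤ |x u - 1/2| := le_trans hεm (min_le_right _ _)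
      by_cases hlt : x u < 1/2
      · refine Or.inr (Or.inl ⟨by simp only [hd_def]; rw [if_neg hg, if_pos hlt],
          lt_of_le_of_ne (hx0 u) (Ne.symm h0), hlt, hεxu, ?_⟩)
        have habs : |x u - 1/2| = 1/2 - x u := by rw [abs_of_neg (by linarith)]; ring
        rw [habs] at hεabs2
        linarith
      · refine Or.inr (Or.inr ⟨by simp only [hd_def]; rw [if_neg hg, if_neg hlt],
          lt_of_le_of_ne (not_lt.1 hlt) (Ne.symm h2), h1, hεxu, ?_⟩)
        intro hlt1
        have habs : |x u - 1| = 1 - x u := by rw [abs_of_neg (by linarith)]; ring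
        rw [habs] at hεabs1
        exact hεabs1
  have hnn : ∀ s : ℝ, s = 1 ∨ s = -1 → ∀ u, 0 ≤ x u + s * d u := by
    intro s hs u
    rcases hd u with ⟨h, -⟩ | ⟨h, h1, -, h3, -⟩ | ⟨h, -, -, h3, -⟩ <;> rw [h] <;>
      rcases hs with rfl | rfl <;> linarith [hx0 u, hεpos]
  have hedge : ∀ s : ℝ, s = 1 ∨ s = -1 → ∀ a b, G.Adj a b →
      (x a + s * d a) + (x b + s * d b) ≤ 1 := by
    intro s hs a b hab
    have hE := hxE a b hab
    rcases hd a with ⟨ha, hga⟩ | ⟨ha, ha1, ha2, ha3, ha4⟩ | ⟨ha, ha1, ha2, ha3, ha4⟩ <;>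
      rcases hd b with ⟨hb, hgb⟩ | ⟨hb, hb1, hb2, hb3, hb4⟩ | ⟨hb, hb1, hb2, hb3, hb4⟩ <;>
      rw [ha, hb] <;> rcases hs with rfl | rfl <;>
      first
      | linarith
      | (rcases hga with h | h | h
         · have hblt : x b < 1 := lt_of_le_of_ne (by linarith) hb2
           linarith [hb4 hblt]
         · linarith
         · linarith)
      | (rcases hgb with h | h | h
         · have halt : x a < 1 := lt_of_le_of_ne (by linarith) ha2
           linarith [ha4 halt]
         · linarith
         · linarith)
      | (rcases hga with h | h | h <;> linarith)
      | (rcases hgb with h | h | h <;> linarith)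
  have h1 : (fun u => x u + (1:ℝ) * d u) ∈ graphPolytope G :=
    ⟨hnn 1 (Or.inl rfl), hedge 1 (Or.inl rfl)⟩
  have h2 : (fun u => x u + (-1:ℝ) * d u) ∈ graphPolytope G :=
    ⟨hnn (-1) (Or.inr rfl), hedge (-1) (Or.inr rfl)⟩
  have hseg : x ∈ openSegment ℝ (fun u => x u + (1:ℝ) * d u) (fun u => x u + (-1:ℝ) * d u) := by
    refine ⟨1/2, 1/2, by norm_num, by norm_num, by norm_num, ?_⟩
    funext u
    simp only [Pi.add_apply, Pi.smul_apply, smul_eq_mul]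
    ring
  have he1 := hext h1 h2 hseg
  have hdv : d v = 0 := by
    have h := congrFun he1 v
    simp only [one_mul] at h
    linarith [h.le, h.ge]
  rcases hd v with ⟨-, hgv⟩ | ⟨hdv', -⟩ | ⟨hdv', -⟩
  · exact hv hgv
  · rw [hdv] at hdv'; linarith [hdv'.symm.le, hdv'.symm.ge]
  · rw [hdv] at hdv'; linarith [hdv'.symm.le, hdv'.symm.ge]
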